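/- arXiv:1604.05927 — 2 statements merged into one kernel-verified Lean document; each statement's English description precedes it below -/
import Mathlib

section
/- Suppose the data set X^n in ℝ^p (with n > p ≥ 2) is in general position and the Tukey median region M has affine dimension strictly less than p. Then M is contained in an affine hyperplane passing through exactly p of the sample points: there exist a nonzero u ∈ ℝ^p and q ∈ ℝ such that M ⊆ {x ∈ ℝ^p : ⟨u, x⟩ = q} and #{i ∈ {1,…,n} : ⟨u, X_i⟩ = q} = p. -/
open scoped RealInnerProductSpace

/-- Number of data points in the closed halfspace `{y : ⟪u, y⟫ ≤ ⟪u, x⟫}`. -/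
noncomputable def depthCount {p n : ℕ} (X : Fin n → EuclideanSpace ℝ (Fin p))
    (u x : EuclideanSpace ℝ (Fin p)) : ℕ :=
  Nat.card {i : Fin n // ⟪u, X i⟫ ≤ ⟪u, x⟫}

/-- Tukey (halfspace) depth of `x` with respect to the data set `X`:
`(1/n) · inf` over nonzero `u` of the number of data points `i` with `⟪u, X i⟫ ≤ ⟪u, x⟫`. -/
noncomputable def tukeyDepth {p n : ℕ} (X : Fin n → EuclideanSpace ℝ (Fin p))
    (x : EuclideanSpace ℝ (Fin p)) : ℝ :=
  (sInf {k : ℕ | ∃ u : EuclideanSpace ℝ (Fin p), u ≠ 0 ∧ k = depthCount X u x} : ℕ) / n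

/-- Maximum Tukey depth `λ* = sup_x D(x)`. -/
noncomputable def maxDepth {p n : ℕ} (X : Fin n → EuclideanSpace ℝ (Fin p)) : ℝ :=
  ⨆ x, tukeyDepth X x

/-- Tukey median region `M = {x : D(x) = λ*}`. -/
def medianRegion {p n : ℕ} (X : Fin n → EuclideanSpace ℝ (Fin p)) :
    Set (EuclideanSpace ℝ (Fin p)) :=
  {x | tukeyDepth X x = maxDepth X}

/-- The data set is in general position: every affine hyperplane
(set of the form `{y : ⟪u, y⟫ = c}` with `u ≠ 0`) contains at most `p` of the points. -/
def InGeneralPosition {p n : ℕ} (X : Fin n → EuclideanSpace ℝ (Fin p)) : Prop :=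
  ∀ u : EuclideanSpace ℝ (Fin p), u ≠ 0 → ∀ c : ℝ,
    Nat.card {i : Fin n // ⟪u, X i⟫ = c} ≤ p

namespace TukeyAux

open Finset Module Submodule

variable {p n : ℕ}

local notation "E" => EuclideanSpace ℝ (Fin p)

/-- The Tukey depth count (unnormalized). -/
noncomputable def nu (X : Fin n → E) (x : E) : ℕ :=
  sInf {k : ℕ | ∃ u : E, u ≠ 0 ∧ k = depthCount X u x}

lemma tukeyDepth_eq (X : Fin n → E) (x : E) : tukeyDepth X x = (nu X x : ℝ) / n := rfl

lemma natcard_subtype (P : Fin n → Prop) [DecidablePred P] :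
    Nat.card {i : Fin n // P i} = (Finset.univ.filter P).card := by
  classical
  rw [Nat.card_eq_fintype_card, Fintype.card_subtype]

lemma depthCount_eq (X : Fin n → E) (u x : E) :
    depthCount X u x = (Finset.univ.filter fun i => ⟪u, X i⟫ ≤ ⟪u, x⟫).card := by
  classical
  rw [depthCount, natcard_subtype]

lemma depthCount_le (X : Fin n → E) (u x : E) : depthCount X u x ≤ n := by
  classical
  rw [depthCount_eq]
  exact le_trans (card_filter_le _ _) (by simp)

lemma exists_ne_zero (hp : 0 < p) : ∃ u : E, u ≠ 0 := by
  refine ⟨EuclideanSpace.single ⟨0, hp⟩ 1, fun h => ?_⟩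
  have h1 : (EuclideanSpace.single (⟨0, hp⟩ : Fin p) (1:ℝ)) ⟨0, hp⟩ = 1 := by simp
  rw [h] at h1
  simp at h1

lemma nuset_nonempty (hp : 0 < p) (X : Fin n → E) (x : E) :
    {k : ℕ | ∃ u : E, u ≠ 0 ∧ k = depthCount X u x}.Nonempty := by
  obtain ⟨u, hu⟩ := exists_ne_zero hp
  exact ⟨depthCount X u x, u, hu, rfl⟩

lemma nu_le (X : Fin n → E) (x : E) {u : E} (hu : u ≠ 0) : nu X x ≤ depthCount X u x :=
  Nat.sInf_le ⟨u, hu, rfl⟩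

lemma nu_attained (hp : 0 < p) (X : Fin n → E) (x : E) :
    ∃ u : E, u ≠ 0 ∧ depthCount X u x = nu X x := by
  obtain ⟨u, hu, h⟩ := Nat.sInf_mem (nuset_nonempty hp X x)
  exact ⟨u, hu, h.symm⟩

lemma nu_le_n (hp : 0 < p) (X : Fin n → E) (x : E) : nu X x ≤ n := by
  obtain ⟨u, hu⟩ := exists_ne_zero hp
  exact le_trans (nu_le X x hu) (depthCount_le X u x)

/-- Existence of the maximizer and characterization of the median region. -/
lemma median_setup (hp : 0 < p) (hn : 0 < n) (X : Fin n → E) :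
    ∃ N : ℕ, (∀ x, nu X x ≤ N) ∧ (∃ x₀, nu X x₀ = N) ∧
      (∀ x, x ∈ medianRegion X ↔ nu X x = N) := by
  have hnpos : (0 : ℝ) < n := by exact_mod_cast hn
  have hbdd : BddAbove (Set.range (nu X)) := ⟨n, by rintro k ⟨x, rfl⟩; exact nu_le_n hp X x⟩
  have hne : (Set.range (nu X)).Nonempty := ⟨nu X 0, ⟨0, rfl⟩⟩
  obtain ⟨x₀, hx₀⟩ := Nat.sSup_mem hne hbdd
  set N := sSup (Set.range (nu X)) with hN
  have hle : ∀ x, nu X x ≤ N := fun x => le_csSup hbdd ⟨x, rfl⟩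
  have hbdd' : BddAbove (Set.range (tukeyDepth X)) := by
    refine ⟨(n : ℝ), ?_⟩
    rintro r ⟨y, rfl⟩
    rw [tukeyDepth_eq, div_le_iff₀ hnpos]
    have h1 : (nu X y : ℝ) ≤ n := by exact_mod_cast nu_le_n hp X y
    have h2 : (1:ℝ) ≤ n := by exact_mod_cast hn
    nlinarith
  have hmax : maxDepth X = (N : ℝ) / n := by
    apply le_antisymm
    · apply ciSup_le
      intro y
      rw [tukeyDepth_eq]
      exact (div_le_div_iff_of_pos_right hnpos).mpr (by exact_mod_cast hle y)
    · have h1 := le_ciSup hbdd' x₀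
      rw [tukeyDepth_eq, hx₀] at h1
      exact h1
  refine ⟨N, hle, ⟨x₀, hx₀⟩, fun x => ?_⟩
  have : x ∈ medianRegion X ↔ tukeyDepth X x = maxDepth X := Iff.rfl
  rw [this, hmax, tukeyDepth_eq, div_eq_div_iff hnpos.ne' hnpos.ne']
  constructor
  · intro h
    have h2 : (nu X x : ℝ) = N := mul_right_cancel₀ (ne_of_gt hnpos) h
    exact_mod_cast h2
  · intro h; rw [h]

lemma mem_M_iff (hp : 0 < p) {X : Fin n → E} {N : ℕ} (hle : ∀ x, nu X x ≤ N)
    (hchar : ∀ x, x ∈ medianRegion X ↔ nu X x = N) (x : E) :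
    x ∈ medianRegion X ↔ ∀ u : E, u ≠ 0 → N ≤ depthCount X u x := by
  rw [hchar x]
  constructor
  · intro h u hu
    rw [← h]
    exact nu_le X x hu
  · intro h
    refine le_antisymm (hle x) (le_csInf (nuset_nonempty hp X x) ?_)
    rintro k ⟨u, hu, rfl⟩
    exact h u hu

lemma mid_mem (hp : 0 < p) {X : Fin n → E} {N : ℕ} (hle : ∀ x, nu X x ≤ N)
    (hchar : ∀ x, x ∈ medianRegion X ↔ nu X x = N) {x y : E}
    (hx : x ∈ medianRegion X) (hy : y ∈ medianRegion X) :
    ((1:ℝ)/2) • (x + y) ∈ medianRegion X := by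
  classical
  rw [mem_M_iff hp hle hchar]
  intro u hu
  have hx' := (mem_M_iff hp hle hchar x).mp hx u hu
  have hy' := (mem_M_iff hp hle hchar y).mp hy u hu
  have hinner : ⟪u, ((1:ℝ)/2) • (x + y)⟫ = (⟪u, x⟫ + ⟪u, y⟫) / 2 := by
    rw [real_inner_smul_right, inner_add_right]; ring
  rw [depthCount_eq] at hx' hy' ⊢
  rcases le_total ⟪u, x⟫ ⟪u, y⟫ with h | h
  · refine le_trans hx' (card_le_card ?_)
    intro i hi
    simp only [mem_filter, mem_univ, true_and] at hi ⊢
    rw [hinner]; linarith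
  · refine le_trans hy' (card_le_card ?_)
    intro i hi
    simp only [mem_filter, mem_univ, true_and] at hi ⊢
    rw [hinner]; linarith

end TukeyAux
namespace TukeyAux

open Finset Module Submodule

variable {p n : ℕ}

local notation "E" => EuclideanSpace ℝ (Fin p)

/-! ### Perp helpers -/

lemma mem_perp_singleton {u v : E} (h : ⟪u, v⟫ = 0) : v ∈ (span ℝ {u})ᗮ := by
  rw [Submodule.mem_orthogonal]
  intro w hw
  obtain ⟨r, rfl⟩ := Submodule.mem_span_singleton.mp hw
  rw [real_inner_smul_left, h, mul_zero]

lemma span_le_perp {u : E} {S : Set E} (h : ∀ v ∈ S, ⟪u, v⟫ = 0) :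
    span ℝ S ≤ (span ℝ {u})ᗮ :=
  Submodule.span_le.mpr fun v hv => mem_perp_singleton (h v hv)

lemma perp_apply {u v : E} (hv : v ∈ (span ℝ {u})ᗮ) : ⟪u, v⟫ = 0 :=
  (Submodule.mem_orthogonal _ _).mp hv u (Submodule.subset_span rfl)

lemma perp_inner {K : Submodule ℝ E} {g v : E} (hg : g ∈ Kᗮ) (hv : v ∈ K) : ⟪g, v⟫ = 0 := by
  rw [real_inner_comm]
  exact (Submodule.mem_orthogonal _ _).mp hg v hv

lemma finrank_le_of_perp {u : E} (hu : u ≠ 0) {S : Submodule ℝ E}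
    (hS : S ≤ (span ℝ {u})ᗮ) : finrank ℝ S ≤ p - 1 := by
  have h1 : finrank ℝ (span ℝ {u} : Submodule ℝ E) = 1 := finrank_span_singleton hu
  have h2 := Submodule.finrank_add_finrank_orthogonal (K := (span ℝ {u} : Submodule ℝ E))
  rw [finrank_euclideanSpace_fin] at h2
  have h3 := Submodule.finrank_mono hS
  omega

lemma rank_span_single_le (v : E) : finrank ℝ (span ℝ {v} : Submodule ℝ E) ≤ 1 := by
  rcases eq_or_ne v 0 with rfl | hv
  · rw [Submodule.span_zero_singleton]
    simp
  · rw [finrank_span_singleton hv]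

/-! ### GP helpers -/

lemma gp_card {X : Fin n → E} (hgp : InGeneralPosition X) {u : E} (hu : u ≠ 0) (c : ℝ) :
    (Finset.univ.filter fun i => ⟪u, X i⟫ = c).card ≤ p := by
  classical
  have h := hgp u hu c
  rwa [natcard_subtype] at h

lemma exists_offplane {X : Fin n → E} (hgp : InGeneralPosition X) (hn : p < n)
    {u : E} (hu : u ≠ 0) (c : ℝ) : ∃ i, ⟪u, X i⟫ ≠ c := by
  classical
  by_contra h
  push_neg at h
  have he : (Finset.univ.filter fun i => ⟪u, X i⟫ = c) = Finset.univ := by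
    apply Finset.filter_true_of_mem
    exact fun i _ => h i
  have := gp_card hgp hu c
  rw [he, Finset.card_univ, Fintype.card_fin] at this
  omega

/-! ### Pivot lemma -/

lemma exists_pivot (a b : Fin n → ℝ) (hab : ∀ i, a i = 0 → b i = 0) (hex : ∃ i, a i ≠ 0) :
    ∃ s : ℝ, (∀ i, s * a i + b i < 0 → a i < 0) ∧ (∃ i, a i ≠ 0 ∧ s * a i + b i = 0) ∧
      (∀ i, a i = 0 → s * a i + b i = 0) := by
  classical
  obtain ⟨i₀, hi₀⟩ := hex
  set Ω : Finset (Fin n) := Finset.univ.filter fun i => a i ≠ 0 with hΩ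
  have hΩne : Ω.Nonempty := ⟨i₀, by simp [hΩ, hi₀]⟩
  set R : Finset ℝ := Ω.image fun i => -b i / a i with hR
  have hRne : R.Nonempty := hΩne.image _
  set s := R.max' hRne with hs
  have key : ∀ i, a i ≠ 0 → s * a i + b i = a i * (s - (-b i / a i)) := by
    intro i hi
    have h1 : a i * (-b i / a i) = -b i := by field_simp [mul_comm]
    rw [mul_sub, h1]
    ring
  refine ⟨s, ?_, ?_, ?_⟩
  · intro i h
    by_contra h'
    push_neg at h'
    rcases lt_or_eq_of_le h' with hpos | heq
    · have hmem : -b i / a i ∈ R := by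
        rw [hR]
        exact Finset.mem_image_of_mem _ (by simp [hΩ, ne_of_gt hpos])
      have hle : -b i / a i ≤ s := Finset.le_max' R _ hmem
      have := key i (ne_of_gt hpos)
      nlinarith
    · have hbz := hab i heq.symm
      have hz : s * a i + b i = 0 := by rw [← heq, hbz]; ring
      linarith
  · have hmem : R.max' hRne ∈ Ω.image fun i => -b i / a i := R.max'_mem hRne
    obtain ⟨i, hiΩ, hieq⟩ := Finset.mem_image.mp hmem
    have hia : a i ≠ 0 := by
      simp only [hΩ, Finset.mem_filter] at hiΩ
      exact hiΩ.2
    have hieq' : -b i / a i = s := by rw [hieq, hs]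
    refine ⟨i, hia, ?_⟩
    rw [key i hia, hieq']
    ring
  · intro i hi
    rw [hi, hab i hi]
    ring

/-! ### The spans -/

/-- Span of the on-plane points (plane through `x` with normal `u`), relative to `x`. -/
noncomputable def Dx (X : Fin n → E) (x u : E) : Submodule ℝ E :=
  span ℝ ((fun i => X i - x) '' {i | ⟪u, X i - x⟫ = 0})

/-- Span of all pairwise differences of points indexed by `J`. -/
noncomputable def DJ (X : Fin n → E) (J : Finset (Fin n)) : Submodule ℝ E :=
  span ℝ {v | ∃ i ∈ J, ∃ j ∈ J, v = X i - X j}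

lemma Dx_le_perp (X : Fin n → E) (x u : E) : Dx X x u ≤ (span ℝ {u})ᗮ := by
  apply span_le_perp
  rintro v ⟨i, hi, rfl⟩
  exact hi

lemma DJ_le_perp (X : Fin n → E) {u : E} {c : ℝ} {J : Finset (Fin n)}
    (hJ : ∀ i ∈ J, ⟪u, X i⟫ = c) : DJ X J ≤ (span ℝ {u})ᗮ := by
  apply span_le_perp
  rintro v ⟨i, hi, j, hj, rfl⟩
  rw [inner_sub_right, hJ i hi, hJ j hj, sub_self]

lemma DJ_mono (X : Fin n → E) {J J' : Finset (Fin n)} (h : J ⊆ J') : DJ X J ≤ DJ X J' := by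
  apply Submodule.span_mono
  rintro v ⟨i, hi, j, hj, rfl⟩
  exact ⟨i, h hi, j, h hj, rfl⟩

/-! ### Rotation phase 1 -/

lemma rot1 {X : Fin n → E} (hgp : InGeneralPosition X) (hn : p < n) (x : E) :
    ∀ m : ℕ, ∀ u : E, u ≠ 0 → ∀ t : ℕ,
      (Finset.univ.filter fun i => ⟪u, X i⟫ < ⟪u, x⟫).card < t →
      p - 1 - finrank ℝ (Dx X x u) = m →
      ∃ u' : E, u' ≠ 0 ∧ (Finset.univ.filter fun i => ⟪u', X i⟫ < ⟪u', x⟫).card < t ∧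
        finrank ℝ (Dx X x u') = p - 1 := by
  intro m
  induction m using Nat.strong_induction_on with
  | _ m ih =>
    intro u hu t hcnt hm
    by_cases hr : finrank ℝ (Dx X x u) = p - 1
    · exact ⟨u, hu, hcnt, hr⟩
    have hle : Dx X x u ≤ (span ℝ {u})ᗮ := Dx_le_perp X x u
    have hr1 : finrank ℝ (Dx X x u) < p - 1 :=
      lt_of_le_of_ne (finrank_le_of_perp hu hle) hr
    -- find g
    set K := span ℝ {u} ⊔ Dx X x u with hK
    have hKrank : finrank ℝ K < p := by
      have hsum := Submodule.finrank_sup_add_finrank_inf_eq (span ℝ {u}) (Dx X x u)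
      have h1 : finrank ℝ (span ℝ {u} : Submodule ℝ E) = 1 := finrank_span_singleton hu
      rw [← hK] at hsum
      omega
    have hKne : K ≠ ⊤ := by
      intro h
      rw [h, finrank_top, finrank_euclideanSpace_fin] at hKrank
      omega
    have hKbot : Kᗮ ≠ ⊥ := by
      rw [Ne, Submodule.orthogonal_eq_bot_iff]
      exact hKne
    obtain ⟨g, hgK, hg0⟩ := Submodule.exists_mem_ne_zero_of_ne_bot hKbot
    have huK : u ∈ K := Submodule.mem_sup_left (Submodule.subset_span rfl)
    have hgu : ⟪g, u⟫ = 0 := perp_inner hgK huK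
    set a : Fin n → ℝ := fun i => ⟪u, X i - x⟫ with ha
    set b : Fin n → ℝ := fun i => ⟪g, X i - x⟫ with hb
    have hab : ∀ i, a i = 0 → b i = 0 := fun i hi =>
      perp_inner hgK (Submodule.mem_sup_right (Submodule.subset_span ⟨i, hi, rfl⟩))
    have hex : ∃ i, a i ≠ 0 := by
      obtain ⟨i, hi⟩ := exists_offplane hgp hn hu ⟪u, x⟫
      refine ⟨i, fun h => hi ?_⟩
      rw [ha] at h
      simp only [inner_sub_right] at h
      linarith
    obtain ⟨s, hs1, ⟨istar, histar, hzero⟩, hs3⟩ := exists_pivot a b hab hex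
    set u' := s • u + g with hu'
    have hval : ∀ y : E, ⟪u', y⟫ = s * ⟪u, y⟫ + ⟪g, y⟫ := fun y => by
      rw [hu', inner_add_left, real_inner_smul_left]
    have hvalr : ∀ i, ⟪u', X i - x⟫ = s * a i + b i := fun i => hval _
    have hu'0 : u' ≠ 0 := by
      intro h
      have h2 : (0:ℝ) = s * ⟪u, g⟫ + ⟪g, g⟫ := by rw [← hval, h, inner_zero_left]
      have h3 : ⟪u, g⟫ = 0 := by rw [real_inner_comm]; exact hgu
      rw [h3, mul_zero, zero_add] at h2
      exact hg0 (inner_self_eq_zero.mp h2.symm)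
    have hsub : (Finset.univ.filter fun i => ⟪u', X i⟫ < ⟪u', x⟫) ⊆
        (Finset.univ.filter fun i => ⟪u, X i⟫ < ⟪u, x⟫) := by
      intro i hi
      simp only [Finset.mem_filter, Finset.mem_univ, true_and] at hi ⊢
      have h1 : ⟪u', X i - x⟫ < 0 := by rw [inner_sub_right]; linarith
      rw [hvalr] at h1
      have h2 := hs1 i h1
      rw [ha] at h2
      simp only [inner_sub_right] at h2
      linarith
    have hDle : Dx X x u ≤ Dx X x u' := by
      apply Submodule.span_mono
      rintro v ⟨i, hi, rfl⟩
      refine ⟨i, ?_, rfl⟩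
      show ⟪u', X i - x⟫ = 0
      rw [hvalr]
      exact hs3 i hi
    have hmem : (X istar - x) ∈ Dx X x u' := by
      apply Submodule.subset_span
      refine ⟨istar, ?_, rfl⟩
      show ⟪u', X istar - x⟫ = 0
      rw [hvalr]
      exact hzero
    have hnmem : (X istar - x) ∉ Dx X x u := fun h =>
      histar (perp_apply (hle h))
    have hlt : Dx X x u < Dx X x u' := lt_of_le_of_ne hDle (fun h => hnmem (h ▸ hmem))
    have hrlt := Submodule.finrank_lt_finrank_of_lt hlt
    exact ih (p - 1 - finrank ℝ (Dx X x u')) (by omega) u' hu'0 t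
      (lt_of_le_of_lt (Finset.card_le_card hsub) hcnt) rfl

end TukeyAux
namespace TukeyAux

open Finset Module Submodule

variable {p n : ℕ}

local notation "E" => EuclideanSpace ℝ (Fin p)

lemma rot2 {X : Fin n → E} (hgp : InGeneralPosition X) (hn : p < n) (hp : 2 ≤ p)
    (x : E) (u₁ : E) (hu : u₁ ≠ 0) (t : ℕ)
    (hcnt : (Finset.univ.filter fun i => ⟪u₁, X i⟫ < ⟪u₁, x⟫).card < t)
    (hrank : finrank ℝ (Dx X x u₁) = p - 1) :
    ∃ u' : E, ∃ c : ℝ, u' ≠ 0 ∧ ⟪u', x⟫ ≤ c ∧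
      (Finset.univ.filter fun i => ⟪u', X i⟫ < c).card < t ∧
      finrank ℝ (DJ X (Finset.univ.filter fun i => ⟪u', X i⟫ = c)) = p - 1 := by
  classical
  set J₁ : Finset (Fin n) := Finset.univ.filter fun i => ⟪u₁, X i⟫ = ⟪u₁, x⟫ with hJ₁
  have hJmem : ∀ i, i ∈ J₁ ↔ ⟪u₁, X i - x⟫ = 0 := by
    intro i
    simp [hJ₁, inner_sub_right, sub_eq_zero]
  have hJ₁ne : J₁.Nonempty := by
    by_contra h
    rw [Finset.not_nonempty_iff_eq_empty] at h
    have hset : {i : Fin n | ⟪u₁, X i - x⟫ = 0} = ∅ := by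
      ext i
      simp only [Set.mem_setOf_eq, Set.mem_empty_iff_false, iff_false]
      intro hc
      have : i ∈ J₁ := (hJmem i).mpr hc
      rw [h] at this
      exact absurd this (Finset.notMem_empty i)
    have : Dx X x u₁ = ⊥ := by
      rw [Dx, hset]
      simp
    rw [this, finrank_bot] at hrank
    omega
  set j₀ := J₁.min' hJ₁ne with hj₀
  have hj₀J : j₀ ∈ J₁ := J₁.min'_mem hJ₁ne
  have hxj₀ : ⟪u₁, X j₀ - x⟫ = 0 := (hJmem j₀).mp hj₀J
  have hcj₀ : ⟪u₁, X j₀⟫ = ⟪u₁, x⟫ := by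
    rw [inner_sub_right] at hxj₀
    linarith
  by_cases hA : finrank ℝ (DJ X J₁) = p - 1
  · exact ⟨u₁, ⟪u₁, x⟫, hu, le_refl _, hcnt, hA⟩
  -- Case B
  have hDJle : DJ X J₁ ≤ (span ℝ {u₁})ᗮ := by
    refine DJ_le_perp X (c := ⟪u₁, x⟫) ?_
    intro i hi
    rw [hJ₁] at hi
    exact (Finset.mem_filter.mp hi).2
  have hD2r : finrank ℝ (DJ X J₁) < p - 1 := lt_of_le_of_ne (finrank_le_of_perp hu hDJle) hA
  have hDxle : Dx X x u₁ ≤ DJ X J₁ ⊔ span ℝ {x - X j₀} := by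
    rw [Dx, Submodule.span_le]
    rintro v ⟨i, hi, rfl⟩
    have hiJ : i ∈ J₁ := (hJmem i).mpr hi
    have hdecomp : X i - x = (X i - X j₀) - (x - X j₀) := by abel
    show X i - x ∈ (DJ X J₁ ⊔ span ℝ {x - X j₀} : Submodule ℝ E)
    rw [hdecomp]
    exact sub_mem (Submodule.mem_sup_left (Submodule.subset_span ⟨i, hiJ, j₀, hj₀J, rfl⟩))
      (Submodule.mem_sup_right (Submodule.subset_span rfl))
  have hD2low : p - 2 ≤ finrank ℝ (DJ X J₁) := by
    have h1 := Submodule.finrank_mono hDxle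
    have h2 := Submodule.finrank_sup_add_finrank_inf_eq (DJ X J₁) (span ℝ {x - X j₀})
    have h3 := rank_span_single_le (x - X j₀)
    omega
  -- find g
  set K := span ℝ {u₁} ⊔ DJ X J₁ with hK
  have hKrank : finrank ℝ K < p := by
    have hsum := Submodule.finrank_sup_add_finrank_inf_eq (span ℝ {u₁}) (DJ X J₁)
    have h1 : finrank ℝ (span ℝ {u₁} : Submodule ℝ E) = 1 := finrank_span_singleton hu
    rw [← hK] at hsum
    omega
  have hKne : K ≠ ⊤ := by
    intro h
    rw [h, finrank_top, finrank_euclideanSpace_fin] at hKrank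
    omega
  have hKbot : Kᗮ ≠ ⊥ := by
    rw [Ne, Submodule.orthogonal_eq_bot_iff]
    exact hKne
  obtain ⟨g₀, hg₀K, hg₀0⟩ := Submodule.exists_mem_ne_zero_of_ne_bot hKbot
  -- b₀ ≠ 0
  have hb0 : ⟪g₀, x - X j₀⟫ ≠ 0 := by
    intro h0
    have hgDJ : ∀ v ∈ DJ X J₁, ⟪g₀, v⟫ = 0 := fun v hv =>
      perp_inner hg₀K (Submodule.mem_sup_right hv)
    have hgu : ⟪g₀, u₁⟫ = 0 := perp_inner hg₀K (Submodule.mem_sup_left (Submodule.subset_span rfl))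
    have hgDx : ∀ v ∈ Dx X x u₁, ⟪g₀, v⟫ = 0 := by
      intro v hv
      rcases Submodule.mem_sup.mp (hDxle hv) with ⟨y, hy, z, hz, rfl⟩
      obtain ⟨r, rfl⟩ := Submodule.mem_span_singleton.mp hz
      rw [inner_add_right, hgDJ y hy, real_inner_smul_right, h0, mul_zero, add_zero]
    have hdisj : span ℝ {u₁} ⊓ Dx X x u₁ = ⊥ := by
      have hDxperp : Dx X x u₁ ≤ (span ℝ {u₁})ᗮ := Dx_le_perp X x u₁
      exact ((Submodule.orthogonal_disjoint (span ℝ {u₁})).mono_right hDxperp).eq_bot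
    have hsupT : span ℝ {u₁} ⊔ Dx X x u₁ = ⊤ := by
      apply Submodule.eq_top_of_finrank_eq
      have hsum := Submodule.finrank_sup_add_finrank_inf_eq (span ℝ {u₁}) (Dx X x u₁)
      rw [hdisj, finrank_bot, finrank_span_singleton hu, hrank] at hsum
      rw [finrank_euclideanSpace_fin]
      omega
    have hg0' : ⟪g₀, g₀⟫ = 0 := by
      have hgT : ∀ v ∈ (⊤ : Submodule ℝ E), ⟪g₀, v⟫ = 0 := by
        rw [← hsupT]
        intro v hv
        rcases Submodule.mem_sup.mp hv with ⟨y, hy, z, hz, rfl⟩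
        obtain ⟨r, rfl⟩ := Submodule.mem_span_singleton.mp hy
        rw [inner_add_right, real_inner_smul_right, hgu, hgDx z hz, mul_zero, add_zero]
      exact hgT g₀ Submodule.mem_top
    exact hg₀0 (inner_self_eq_zero.mp hg0')
  -- choose sign
  have hgood : ∃ g : E, g ∈ Kᗮ ∧ g ≠ 0 ∧ ⟪g, x - X j₀⟫ < 0 := by
    rcases lt_or_gt_of_ne hb0 with h | h
    · exact ⟨g₀, hg₀K, hg₀0, h⟩
    · refine ⟨-g₀, Submodule.neg_mem _ hg₀K, neg_ne_zero.mpr hg₀0, ?_⟩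
      rw [inner_neg_left]
      linarith
  obtain ⟨g, hgK, hg0, hbneg⟩ := hgood
  have hgu : ⟪g, u₁⟫ = 0 := perp_inner hgK (Submodule.mem_sup_left (Submodule.subset_span rfl))
  have hgDJ : ∀ v ∈ DJ X J₁, ⟪g, v⟫ = 0 := fun v hv =>
    perp_inner hgK (Submodule.mem_sup_right hv)
  set a : Fin n → ℝ := fun i => ⟪u₁, X i - X j₀⟫ with ha
  set b : Fin n → ℝ := fun i => ⟪g, X i - X j₀⟫ with hb
  have haJ : ∀ i, a i = 0 ↔ i ∈ J₁ := by
    intro i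
    rw [ha]
    simp only [inner_sub_right]
    rw [hJ₁]
    simp only [Finset.mem_filter, Finset.mem_univ, true_and]
    constructor
    · intro h; linarith [hcj₀]
    · intro h; linarith [hcj₀]
  have hab : ∀ i, a i = 0 → b i = 0 := fun i hi =>
    hgDJ (X i - X j₀) (Submodule.subset_span ⟨i, (haJ i).mp hi, j₀, hj₀J, rfl⟩)
  have hex : ∃ i, a i ≠ 0 := by
    obtain ⟨i, hi⟩ := exists_offplane hgp hn hu ⟪u₁, X j₀⟫
    refine ⟨i, fun h => hi ?_⟩
    rw [ha] at h
    simp only [inner_sub_right] at h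
    linarith
  obtain ⟨s, hs1, ⟨istar, histar, hzero⟩, hs3⟩ := exists_pivot a b hab hex
  set u' := s • u₁ + g with hu'
  have hval : ∀ y : E, ⟪u', y⟫ = s * ⟪u₁, y⟫ + ⟪g, y⟫ := fun y => by
    rw [hu', inner_add_left, real_inner_smul_left]
  have hvalr : ∀ i, ⟪u', X i - X j₀⟫ = s * a i + b i := fun i => hval _
  have hu'0 : u' ≠ 0 := by
    intro h
    have h2 : (0:ℝ) = s * ⟪u₁, g⟫ + ⟪g, g⟫ := by rw [← hval, h, inner_zero_left]
    have h3 : ⟪u₁, g⟫ = 0 := by rw [real_inner_comm]; exact hgu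
    rw [h3, mul_zero, zero_add] at h2
    exact hg0 (inner_self_eq_zero.mp h2.symm)
  set c := ⟪u', X j₀⟫ with hc
  have hxu₁ : ⟪u₁, x - X j₀⟫ = 0 := by
    rw [inner_sub_right] at hxj₀ ⊢
    linarith
  have hxside : ⟪u', x⟫ < c := by
    have h1 : ⟪u', x - X j₀⟫ = s * ⟪u₁, x - X j₀⟫ + ⟪g, x - X j₀⟫ := hval _
    rw [hxu₁, mul_zero, zero_add] at h1
    have h2 : ⟪u', x - X j₀⟫ < 0 := by rw [h1]; exact hbneg
    rw [inner_sub_right] at h2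
    rw [hc]
    linarith
  refine ⟨u', c, hu'0, le_of_lt hxside, ?_, ?_⟩
  · apply lt_of_le_of_lt (Finset.card_le_card ?_) hcnt
    intro i hi
    simp only [Finset.mem_filter, Finset.mem_univ, true_and] at hi ⊢
    have h1 : ⟪u', X i - X j₀⟫ < 0 := by
      rw [inner_sub_right]
      rw [hc] at hi
      linarith
    rw [hvalr] at h1
    have h2 := hs1 i h1
    rw [ha] at h2
    simp only [inner_sub_right] at h2
    linarith [hcj₀]
  · set J' : Finset (Fin n) := Finset.univ.filter fun i => ⟪u', X i⟫ = c with hJ'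
    have hJ'mem : ∀ i, i ∈ J' ↔ ⟪u', X i - X j₀⟫ = 0 := by
      intro i
      rw [hJ']
      simp only [Finset.mem_filter, Finset.mem_univ, true_and, inner_sub_right, hc, sub_eq_zero]
    have hJ'sub : J₁ ⊆ J' := by
      intro i hi
      rw [hJ'mem i, hvalr]
      exact hs3 i ((haJ i).mpr hi)
    have hj₀J' : j₀ ∈ J' := hJ'sub hj₀J
    have histarJ' : istar ∈ J' := by
      rw [hJ'mem istar, hvalr]
      exact hzero
    have hup : DJ X J' ≤ (span ℝ {u'})ᗮ := by
      refine DJ_le_perp X (c := c) ?_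
      intro i hi
      rw [hJ'] at hi
      exact (Finset.mem_filter.mp hi).2
    have hle' : finrank ℝ (DJ X J') ≤ p - 1 := finrank_le_of_perp hu'0 hup
    have hDJsub : DJ X J₁ ≤ DJ X J' := DJ_mono X hJ'sub
    have hvmem : X istar - X j₀ ∈ DJ X J' :=
      Submodule.subset_span ⟨istar, histarJ', j₀, hj₀J', rfl⟩
    have hvnmem : X istar - X j₀ ∉ DJ X J₁ := by
      intro h
      have := perp_apply (hDJle h)
      rw [ha] at histar
      exact histar this
    have hlt : DJ X J₁ < DJ X J' := lt_of_le_of_ne hDJsub (fun h => hvnmem (h ▸ hvmem))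
    have := Submodule.finrank_lt_finrank_of_lt hlt
    omega

end TukeyAux
namespace TukeyAux

open Finset Module Submodule

variable {p n : ℕ}

local notation "E" => EuclideanSpace ℝ (Fin p)

/-- Canonical nonzero normal vector of the hyperplane spanned by the points of `J`. -/
noncomputable def canonU (X : Fin n → E) (J : Finset (Fin n)) : E :=
  letI := Classical.dec ((DJ X J)ᗮ ≠ ⊥)
  if h : (DJ X J)ᗮ ≠ ⊥ then (Submodule.exists_mem_ne_zero_of_ne_bot h).choose else 0

lemma canonU_spec (X : Fin n → E) (J : Finset (Fin n)) (h : (DJ X J)ᗮ ≠ ⊥) :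
    canonU X J ∈ (DJ X J)ᗮ ∧ canonU X J ≠ 0 := by
  rw [canonU, dif_pos h]
  obtain ⟨h1, h2⟩ := (Submodule.exists_mem_ne_zero_of_ne_bot h).choose_spec
  exact ⟨h1, h2⟩

/-- Canonical offset. -/
noncomputable def cJ (X : Fin n → E) (J : Finset (Fin n)) : ℝ :=
  if h : J.Nonempty then ⟪canonU X J, X (J.min' h)⟫ else 0

-- The finite family of candidate halfspaces at threshold `t`.
open scoped Classical in
noncomputable def calF (X : Fin n → E) (t : ℕ) : Finset (E × ℝ) :=
  ((((Finset.univ : Finset (Fin n)).powersetCard p).filter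
        fun J => finrank ℝ (DJ X J) = p - 1).image (fun J => (canonU X J, cJ X J)) ∪
    (((Finset.univ : Finset (Fin n)).powersetCard p).filter
        fun J => finrank ℝ (DJ X J) = p - 1).image (fun J => (-canonU X J, -cJ X J))).filter
    fun f => (Finset.univ.filter fun i => ⟪f.1, X i⟫ < f.2).card < t

lemma calF_spec {X : Fin n → E} {t : ℕ} {f : E × ℝ} (hf : f ∈ calF X t) :
    ∃ J : Finset (Fin n), J.card = p ∧ finrank ℝ (DJ X J) = p - 1 ∧
      (f = (canonU X J, cJ X J) ∨ f = (-canonU X J, -cJ X J)) ∧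
      (Finset.univ.filter fun i => ⟪f.1, X i⟫ < f.2).card < t := by
  classical
  rw [calF, Finset.mem_filter] at hf
  obtain ⟨hmem, hcnt⟩ := hf
  rcases Finset.mem_union.mp hmem with h | h <;>
  · obtain ⟨J, hJ, rfl⟩ := Finset.mem_image.mp h
    rw [Finset.mem_filter, Finset.mem_powersetCard] at hJ
    exact ⟨J, hJ.1.2, hJ.2, by simp, hcnt⟩

lemma DJ_orth_ne_bot {X : Fin n → E} {J : Finset (Fin n)} (hp : 1 ≤ p)
    (hrk : finrank ℝ (DJ X J) = p - 1) : (DJ X J)ᗮ ≠ ⊥ := by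
  intro h
  have hsum := Submodule.finrank_add_finrank_orthogonal (K := DJ X J)
  rw [h, finrank_bot, finrank_euclideanSpace_fin, hrk] at hsum
  omega

lemma canonU_onplane {X : Fin n → E} {J : Finset (Fin n)} (hp : 1 ≤ p)
    (hrk : finrank ℝ (DJ X J) = p - 1) (hne : J.Nonempty) :
    ∀ i ∈ J, ⟪canonU X J, X i⟫ = cJ X J := by
  obtain ⟨hmem, -⟩ := canonU_spec X J (DJ_orth_ne_bot hp hrk)
  intro i hi
  have h1 : X i - X (J.min' hne) ∈ DJ X J :=
    Submodule.subset_span ⟨i, hi, J.min' hne, J.min'_mem hne, rfl⟩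
  have h2 : ⟪canonU X J, X i - X (J.min' hne)⟫ = 0 := perp_inner hmem h1
  rw [inner_sub_right, sub_eq_zero] at h2
  rw [cJ, dif_pos hne]
  exact h2

lemma calF_fst_ne {X : Fin n → E} {t : ℕ} {f : E × ℝ} (hp : 1 ≤ p) (hf : f ∈ calF X t) :
    f.1 ≠ 0 := by
  obtain ⟨J, hcard, hrk, hform, -⟩ := calF_spec hf
  have h0 := (canonU_spec X J (DJ_orth_ne_bot hp hrk)).2
  rcases hform with rfl | rfl
  · exact h0
  · exact neg_ne_zero.mpr h0

lemma calF_onplane {X : Fin n → E} (hgp : InGeneralPosition X) {t : ℕ} {f : E × ℝ}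
    (hp : 1 ≤ p) (hf : f ∈ calF X t) :
    Nat.card {i : Fin n // ⟪f.1, X i⟫ = f.2} = p := by
  classical
  obtain ⟨J, hcard, hrk, hform, -⟩ := calF_spec hf
  have hne : J.Nonempty := Finset.card_pos.mp (by omega)
  have h0 := (canonU_spec X J (DJ_orth_ne_bot hp hrk)).2
  have honp := canonU_onplane hp hrk hne
  have hfilter : (Finset.univ.filter fun i => ⟪f.1, X i⟫ = f.2) =
      (Finset.univ.filter fun i => ⟪canonU X J, X i⟫ = cJ X J) := by
    rcases hform with rfl | rfl
    · rfl
    · apply Finset.filter_congr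
      intro i _
      simp only [inner_neg_left, neg_inj]
  rw [natcard_subtype, hfilter]
  apply le_antisymm
  · exact gp_card hgp h0 _
  · calc p = J.card := hcard.symm
      _ ≤ _ := Finset.card_le_card (fun i hi => Finset.mem_filter.mpr ⟨Finset.mem_univ i, honp i hi⟩)

/-- DJ of the empty set is ⊥. -/
lemma DJ_empty (X : Fin n → E) : DJ X (∅ : Finset (Fin n)) = ⊥ := by
  rw [DJ]
  convert Submodule.span_empty
  ext v
  simp

/-- If `finrank (DJ X J) = p - 1` for the exact on-plane set `J`, then `J.card = p`. -/
lemma onplane_card {X : Fin n → E} (hgp : InGeneralPosition X) (hp : 2 ≤ p)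
    {u : E} (hu : u ≠ 0) (c : ℝ)
    (hrk : finrank ℝ (DJ X (Finset.univ.filter fun i => ⟪u, X i⟫ = c)) = p - 1) :
    (Finset.univ.filter fun i => ⟪u, X i⟫ = c).card = p := by
  classical
  set J := Finset.univ.filter fun i => ⟪u, X i⟫ = c with hJ
  have hub : J.card ≤ p := gp_card hgp hu c
  have hne : J.Nonempty := by
    by_contra h
    rw [Finset.not_nonempty_iff_eq_empty] at h
    rw [h, DJ_empty, finrank_bot] at hrk
    omega
  set j₀ := J.min' hne with hj₀
  have hj₀J : j₀ ∈ J := J.min'_mem hne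
  -- DJ X J ≤ span of the (card J - 1) vectors X i - X j₀ over i ∈ J.erase j₀
  have hDle : DJ X J ≤ span ℝ (((J.erase j₀).image fun i => X i - X j₀ : Finset E) : Set E) := by
    have hterm : ∀ i ∈ J, X i - X j₀ ∈
        span ℝ (((J.erase j₀).image fun i => X i - X j₀ : Finset E) : Set E) := by
      intro i hi
      by_cases hij : i = j₀
      · rw [hij, sub_self]
        exact Submodule.zero_mem _
      · exact Submodule.subset_span (Finset.mem_coe.mpr
          (Finset.mem_image_of_mem _ (Finset.mem_erase.mpr ⟨hij, hi⟩)))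
    rw [DJ, Submodule.span_le]
    rintro v ⟨i, hi, j, hj, rfl⟩
    have hdecomp : X i - X j = (X i - X j₀) - (X j - X j₀) := by abel
    show X i - X j ∈ span ℝ (((J.erase j₀).image fun i => X i - X j₀ : Finset E) : Set E)
    rw [hdecomp]
    exact sub_mem (hterm i hi) (hterm j hj)
  have h1 := Submodule.finrank_mono hDle
  have h2 := finrank_span_finset_le_card (R := ℝ) ((J.erase j₀).image fun i => X i - X j₀)
  have h3 := Finset.card_image_le (s := J.erase j₀) (f := fun i => X i - X j₀)
  have h4 : (J.erase j₀).card = J.card - 1 := Finset.card_erase_of_mem hj₀J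
  have h5 : 1 ≤ J.card := hne.card_pos
  rw [hrk] at h1
  -- h2 : Set.finrank of the coe; align it
  have h2' : finrank ℝ (span ℝ (((J.erase j₀).image fun i => X i - X j₀ : Finset E) : Set E)) ≤
      ((J.erase j₀).image fun i => X i - X j₀).card := h2
  omega

/-- Canonicalization: any terminal halfspace weakly containing x is dominated by a member of calF. -/
lemma to_calF {X : Fin n → E} (hgp : InGeneralPosition X) (hp : 2 ≤ p) {t : ℕ}
    {u : E} {c : ℝ} {x : E} (hu : u ≠ 0)
    (hcnt : (Finset.univ.filter fun i => ⟪u, X i⟫ < c).card < t)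
    (hx : ⟪u, x⟫ ≤ c)
    (hrk : finrank ℝ (DJ X (Finset.univ.filter fun i => ⟪u, X i⟫ = c)) = p - 1) :
    ∃ f ∈ calF X t, ⟪f.1, x⟫ ≤ f.2 := by
  classical
  set J := Finset.univ.filter fun i => ⟪u, X i⟫ = c with hJ
  have hcard : J.card = p := onplane_card hgp hp hu c hrk
  have hne : J.Nonempty := Finset.card_pos.mp (by omega)
  set j₀ := J.min' hne with hj₀
  have hj₀J : j₀ ∈ J := J.min'_mem hne
  have hJmem : ∀ i ∈ J, ⟪u, X i⟫ = c := fun i hi => (Finset.mem_filter.mp hi).2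
  have hJ𝒥 : J ∈ (((Finset.univ : Finset (Fin n)).powersetCard p).filter
      fun J => finrank ℝ (DJ X J) = p - 1) := by
    rw [Finset.mem_filter, Finset.mem_powersetCard]
    exact ⟨⟨Finset.subset_univ J, hcard⟩, hrk⟩
  have hbot : (DJ X J)ᗮ ≠ ⊥ := DJ_orth_ne_bot (by omega) hrk
  obtain ⟨hwperp, hw0⟩ := canonU_spec X J hbot
  set w := canonU X J with hwdef
  -- u ∈ (DJ X J)ᗮ
  have hDJperp : DJ X J ≤ (span ℝ {u})ᗮ := DJ_le_perp X hJmem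
  have huperp : u ∈ (DJ X J)ᗮ := by
    have h1 := Submodule.orthogonal_le hDJperp
    rw [Submodule.orthogonal_orthogonal] at h1
    exact h1 (Submodule.subset_span rfl)
  have hrk1 : finrank ℝ ((DJ X J)ᗮ : Submodule ℝ E) = 1 := by
    have hsum := Submodule.finrank_add_finrank_orthogonal (K := DJ X J)
    rw [finrank_euclideanSpace_fin, hrk] at hsum
    omega
  have hspan : span ℝ {w} = (DJ X J)ᗮ := by
    apply Submodule.eq_of_le_of_finrank_le
    · rw [Submodule.span_le, Set.singleton_subset_iff]
      exact hwperp
    · rw [hrk1, finrank_span_singleton hw0]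
  obtain ⟨r, hr⟩ := Submodule.mem_span_singleton.mp (hspan ▸ huperp)
  have hr0 : r ≠ 0 := by
    intro h
    rw [h, zero_smul] at hr
    exact hu hr.symm
  have hcw : c = r * cJ X J := by
    have h1 : ⟪u, X j₀⟫ = c := hJmem j₀ hj₀J
    rw [← hr, real_inner_smul_left] at h1
    rw [cJ, dif_pos hne, ← h1]
  have honp := canonU_onplane (by omega : 1 ≤ p) hrk hne
  rcases lt_or_gt_of_ne hr0 with hneg | hpos
  · refine ⟨(-w, -cJ X J), ?_, ?_⟩
    · rw [calF, Finset.mem_filter]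
      constructor
      · exact Finset.mem_union_right _ (Finset.mem_image_of_mem _ hJ𝒥)
      · have hset : (Finset.univ.filter fun i => ⟪(-w : E), X i⟫ < -cJ X J) =
            (Finset.univ.filter fun i => ⟪u, X i⟫ < c) := by
          apply Finset.filter_congr
          intro i _
          rw [inner_neg_left, neg_lt_neg_iff, ← hr, real_inner_smul_left, hcw]
          constructor
          · intro h; nlinarith
          · intro h; nlinarith
        rw [hset]
        exact hcnt
    · show ⟪(-w : E), x⟫ ≤ -cJ X J
      rw [inner_neg_left, neg_le_neg_iff]
      rw [← hr, real_inner_smul_left, hcw] at hx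
      nlinarith
  · refine ⟨(w, cJ X J), ?_, ?_⟩
    · rw [calF, Finset.mem_filter]
      constructor
      · exact Finset.mem_union_left _ (Finset.mem_image_of_mem _ hJ𝒥)
      · have hset : (Finset.univ.filter fun i => ⟪w, X i⟫ < cJ X J) =
            (Finset.univ.filter fun i => ⟪u, X i⟫ < c) := by
          apply Finset.filter_congr
          intro i _
          rw [← hr, real_inner_smul_left, hcw]
          constructor
          · intro h; nlinarith
          · intro h; nlinarith
        rw [hset]
        exact hcnt
    · show ⟪w, x⟫ ≤ cJ X J
      rw [← hr, real_inner_smul_left, hcw] at hx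
      nlinarith

end TukeyAux
/-- If `Xⁿ` is in general position and the median region has affine dimension `< p`,
then the median region is contained in an affine hyperplane passing through exactly `p`
of the sample points. -/
theorem medianRegion_subset_hyperplane_of_lowDim {p n : ℕ} (hp : 2 ≤ p) (hn : p < n)
    (X : Fin n → EuclideanSpace ℝ (Fin p))
    (hgp : InGeneralPosition X)
    (hdim : Module.finrank ℝ (affineSpan ℝ (medianRegion X)).direction < p) :
    ∃ u : EuclideanSpace ℝ (Fin p), u ≠ 0 ∧ ∃ q : ℝ,
      medianRegion X ⊆ {x : EuclideanSpace ℝ (Fin p) | ⟪u, x⟫ = q} ∧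
      Nat.card {i : Fin n // ⟪u, X i⟫ = q} = p := by
  classical
  have hp0 : 0 < p := by omega
  have hp1 : 1 ≤ p := by omega
  obtain ⟨N, hNle, ⟨x₀, hx₀⟩, hchar⟩ := TukeyAux.median_setup hp0 (by omega) X
  set F := TukeyAux.calF X N with hF
  by_cases hcase : ∃ f ∈ F, ∀ x ∈ medianRegion X, ⟪f.1, x⟫ = f.2
  · obtain ⟨f, hfF, hfall⟩ := hcase
    exact ⟨f.1, TukeyAux.calF_fst_ne hp1 hfF, f.2, fun x hx => hfall x hx,
      TukeyAux.calF_onplane hgp hp1 hfF⟩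
  · exfalso
    push_neg at hcase
    -- every member of F bounds the median region from below
    have hMlb : ∀ f ∈ F, ∀ x ∈ medianRegion X, f.2 ≤ ⟪f.1, x⟫ := by
      intro f hfF x hx
      by_contra hlt
      push_neg at hlt
      have h1 : N ≤ depthCount X f.1 x :=
        (TukeyAux.mem_M_iff hp0 hNle hchar x).mp hx f.1 (TukeyAux.calF_fst_ne hp1 hfF)
      obtain ⟨J, hcard, hrk, hform, hcntf⟩ := TukeyAux.calF_spec hfF
      rw [TukeyAux.depthCount_eq] at h1
      have hsub : (Finset.univ.filter fun i => ⟪f.1, X i⟫ ≤ ⟪f.1, x⟫) ⊆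
          (Finset.univ.filter fun i => ⟪f.1, X i⟫ < f.2) := by
        intro i hi
        simp only [Finset.mem_filter, Finset.mem_univ, true_and] at hi ⊢
        linarith
      have h2 := Finset.card_le_card hsub
      omega
    -- completeness: points outside M violate some member of F
    have hcomplete : ∀ x, x ∉ medianRegion X → ∃ f ∈ F, ⟪f.1, x⟫ ≤ f.2 := by
      intro x hx
      have hnux : TukeyAux.nu X x ≠ N := fun h => hx ((hchar x).mpr h)
      have h1 : TukeyAux.nu X x < N := lt_of_le_of_ne (hNle x) hnux
      obtain ⟨u, hu, hdc⟩ := TukeyAux.nu_attained hp0 X x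
      have hcnt0 : (Finset.univ.filter fun i => ⟪u, X i⟫ < ⟪u, x⟫).card < N := by
        have hsub : (Finset.univ.filter fun i => ⟪u, X i⟫ < ⟪u, x⟫) ⊆
            (Finset.univ.filter fun i => ⟪u, X i⟫ ≤ ⟪u, x⟫) := by
          intro i hi
          simp only [Finset.mem_filter, Finset.mem_univ, true_and] at hi ⊢
          linarith
        have h2 := Finset.card_le_card hsub
        rw [← TukeyAux.depthCount_eq, hdc] at h2
        omega
      obtain ⟨u₁, hu₁, hcnt₁, hrk₁⟩ := TukeyAux.rot1 hgp hn x
        (p - 1 - Module.finrank ℝ (TukeyAux.Dx X x u)) u hu N hcnt0 rfl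
      obtain ⟨u', c, hu', hxside, hcnt', hrk'⟩ := TukeyAux.rot2 hgp hn hp x u₁ hu₁ N hcnt₁ hrk₁
      exact TukeyAux.to_calF hgp hp hu' hcnt' hxside hrk'
    -- build a point of M strictly inside every halfspace of F
    have hxbar : ∃ xb ∈ medianRegion X, ∀ f ∈ F, f.2 < ⟪f.1, xb⟫ := by
      suffices h : ∀ G : Finset (EuclideanSpace ℝ (Fin p) × ℝ), G ⊆ F →
          ∃ xb ∈ medianRegion X, ∀ f ∈ G, f.2 < ⟪f.1, xb⟫ by
        exact h F (le_refl F)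
      intro G
      induction G using Finset.induction_on with
      | empty =>
        intro _
        refine ⟨x₀, (hchar x₀).mpr hx₀, ?_⟩
        intro f hf
        exact absurd hf (Finset.notMem_empty f)
      | @insert f G hfG ih =>
        intro hsub
        obtain ⟨xb, hxbM, hxbG⟩ := ih (fun y hy => hsub (Finset.mem_insert_of_mem hy))
        have hfF : f ∈ F := hsub (Finset.mem_insert_self f G)
        obtain ⟨xf, hxfM, hxfne⟩ := hcase f hfF
        have hxfgt : f.2 < ⟪f.1, xf⟫ := lt_of_le_of_ne (hMlb f hfF xf hxfM) (Ne.symm hxfne)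
        refine ⟨((1:ℝ)/2) • (xb + xf), TukeyAux.mid_mem hp0 hNle hchar hxbM hxfM, ?_⟩
        intro f' hf'
        have hinner : ⟪f'.1, ((1:ℝ)/2) • (xb + xf)⟫ = (⟪f'.1, xb⟫ + ⟪f'.1, xf⟫) / 2 := by
          rw [real_inner_smul_right, inner_add_right]; ring
        rw [hinner]
        rcases Finset.mem_insert.mp hf' with rfl | hf'G
        · have h1 := hMlb f' hfF xb hxbM
          linarith
        · have h1 := hxbG f' hf'G
          have h2 := hMlb f' (hsub (Finset.mem_insert_of_mem hf'G)) xf hxfM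
          linarith
    obtain ⟨xb, hxbM, hxbs⟩ := hxbar
    -- the median region has full-dimensional affine span: contradiction
    have hdir : ∀ v : EuclideanSpace ℝ (Fin p), v ∈ (affineSpan ℝ (medianRegion X)).direction := by
      intro v
      rcases eq_or_ne v 0 with rfl | hv0
      · exact Submodule.zero_mem _
      have hex : ∃ ε : ℝ, 0 < ε ∧ ∀ f ∈ F, ε * (‖f.1‖ * ‖v‖) < ⟪f.1, xb⟫ - f.2 := by
        rcases F.eq_empty_or_nonempty with hFe | hFne
        · refine ⟨1, one_pos, ?_⟩
          intro f hf
          rw [hFe] at hf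
          exact absurd hf (Finset.notMem_empty f)
        · set D := F.image fun f => (⟪f.1, xb⟫ - f.2) / (‖f.1‖ * ‖v‖ + 1) with hD
          have hDne : D.Nonempty := hFne.image _
          refine ⟨D.min' hDne, ?_, ?_⟩
          · obtain ⟨f, hfF, hfeq⟩ := Finset.mem_image.mp (D.min'_mem hDne)
            rw [← hfeq]
            apply div_pos
            · linarith [hxbs f hfF]
            · positivity
          · intro f hfF
            have hle : D.min' hDne ≤ (⟪f.1, xb⟫ - f.2) / (‖f.1‖ * ‖v‖ + 1) :=
              Finset.min'_le D _ (Finset.mem_image_of_mem _ hfF)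
            have hgap : 0 < ⟪f.1, xb⟫ - f.2 := by linarith [hxbs f hfF]
            have hden : (0:ℝ) < ‖f.1‖ * ‖v‖ + 1 := by positivity
            have hnn : (0:ℝ) ≤ ‖f.1‖ * ‖v‖ := by positivity
            have h2 : D.min' hDne * (‖f.1‖ * ‖v‖) ≤
                ((⟪f.1, xb⟫ - f.2) / (‖f.1‖ * ‖v‖ + 1)) * (‖f.1‖ * ‖v‖) :=
              mul_le_mul_of_nonneg_right hle hnn
            have h3 : ((⟪f.1, xb⟫ - f.2) / (‖f.1‖ * ‖v‖ + 1)) * (‖f.1‖ * ‖v‖) <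
                ⟪f.1, xb⟫ - f.2 := by
              rw [div_mul_eq_mul_div, div_lt_iff₀ hden]
              nlinarith
            linarith
      obtain ⟨ε, hε, hεf⟩ := hex
      have hmem2 : xb + ε • v ∈ medianRegion X := by
        by_contra hnot
        obtain ⟨f, hfF, hle⟩ := hcomplete _ hnot
        have h1 : ⟪f.1, xb + ε • v⟫ = ⟪f.1, xb⟫ + ε * ⟪f.1, v⟫ := by
          rw [inner_add_right, real_inner_smul_right]
        have h3 := abs_le.mp (abs_real_inner_le_norm f.1 v)
        have h2 := hεf f hfF
        have h5 : -(ε * (‖f.1‖ * ‖v‖)) ≤ ε * ⟪f.1, v⟫ := by nlinarith [h3.1, hε.le]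
        linarith [hle, h1, h2, h5]
      have h1 : xb + ε • v ∈ affineSpan ℝ (medianRegion X) := subset_affineSpan ℝ _ hmem2
      have h2 : xb ∈ affineSpan ℝ (medianRegion X) := subset_affineSpan ℝ _ hxbM
      have h3 := AffineSubspace.vsub_mem_direction h1 h2
      have h4 : (xb + ε • v) -ᵥ xb = ε • v := by
        simp [vsub_eq_sub]
      rw [h4] at h3
      have h5 := Submodule.smul_mem _ ε⁻¹ h3
      rwa [smul_smul, inv_mul_cancel₀ (ne_of_gt hε), one_smul] at h5
    have htop : (affineSpan ℝ (medianRegion X)).direction = ⊤ := by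
      rw [eq_top_iff]
      exact fun v _ => hdir v
    rw [htop, finrank_top, finrank_euclideanSpace_fin] at hdim
    exact lt_irrefl p hdim
end

section
/- For any finite data set X^n = (X_1, …, X_n) in ℝ^p with n ≥ 1, the Tukey median region M = {x ∈ ℝ^p : D(x) = λ*} is a nonempty, convex, and compact subset of ℝ^p; in particular the supremum defining λ* is attained. -/
open scoped RealInnerProductSpace

section TukeyAux

variable {p n : ℕ} (X : Fin n → EuclideanSpace ℝ (Fin p))

lemma exists_ne_zero_dir (hp : 1 ≤ p) : ∃ u : EuclideanSpace ℝ (Fin p), u ≠ 0 := by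
  refine ⟨EuclideanSpace.single ⟨0, hp⟩ 1, fun h => ?_⟩
  have := congrArg (fun v : EuclideanSpace ℝ (Fin p) => v ⟨0, hp⟩) h
  simp [EuclideanSpace.single_apply] at this

lemma depthCount_eq (u x : EuclideanSpace ℝ (Fin p)) :
    depthCount X u x = (Finset.univ.filter fun i => ⟪u, X i⟫ ≤ ⟪u, x⟫).card := by
  rw [depthCount, Nat.card_eq_fintype_card, Fintype.card_subtype]

lemma depthCount_le_n (u x : EuclideanSpace ℝ (Fin p)) : depthCount X u x ≤ n := by
  rw [depthCount_eq]
  exact (Finset.card_filter_le _ _).trans (by simp)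

lemma depthCount_mono {u x y : EuclideanSpace ℝ (Fin p)} (h : ⟪u, x⟫ ≤ ⟪u, y⟫) :
    depthCount X u x ≤ depthCount X u y := by
  rw [depthCount_eq, depthCount_eq]
  refine Finset.card_le_card fun i hi => ?_
  simp only [Finset.mem_filter, Finset.mem_univ, true_and] at hi ⊢
  linarith

lemma dSet_nonempty (hp : 1 ≤ p) (x : EuclideanSpace ℝ (Fin p)) :
    {k : ℕ | ∃ u : EuclideanSpace ℝ (Fin p), u ≠ 0 ∧ k = depthCount X u x}.Nonempty := by
  obtain ⟨u, hu⟩ := exists_ne_zero_dir (p := p) hp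
  exact ⟨depthCount X u x, u, hu, rfl⟩

lemma tukey_mem_image (hp : 1 ≤ p) (x : EuclideanSpace ℝ (Fin p)) :
    tukeyDepth X x ∈ (fun k : ℕ => (k : ℝ) / n) '' Set.Iic n := by
  obtain ⟨u, hu, hk⟩ := Nat.sInf_mem (dSet_nonempty X hp x)
  exact ⟨_, by rw [Set.mem_Iic, hk]; exact depthCount_le_n X u x, rfl⟩

lemma range_finite (hp : 1 ≤ p) : (Set.range (tukeyDepth X)).Finite :=
  Set.Finite.subset ((Set.finite_Iic n).image _)
    (by rintro _ ⟨x, rfl⟩; exact tukey_mem_image X hp x)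

lemma le_maxDepth (hp : 1 ≤ p) (x : EuclideanSpace ℝ (Fin p)) :
    tukeyDepth X x ≤ maxDepth X :=
  le_ciSup (range_finite X hp).bddAbove x

lemma maxDepth_attained (hp : 1 ≤ p) :
    ∃ x : EuclideanSpace ℝ (Fin p), tukeyDepth X x = maxDepth X := by
  have h := (Set.range_nonempty (tukeyDepth X)).csSup_mem (range_finite X hp)
  obtain ⟨x, hx⟩ := h
  exact ⟨x, hx⟩

lemma mem_median_iff (hp : 1 ≤ p) (hn : 1 ≤ n) (x : EuclideanSpace ℝ (Fin p)) :
    x ∈ medianRegion X ↔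
      ∀ u : EuclideanSpace ℝ (Fin p), u ≠ 0 →
        ⌈maxDepth X * n⌉₊ ≤ depthCount X u x := by
  have hn0 : (0 : ℝ) < n := by exact_mod_cast hn
  constructor
  · intro hx u hu
    have hs : maxDepth X * n ≤
        ((sInf {k : ℕ | ∃ u : EuclideanSpace ℝ (Fin p), u ≠ 0 ∧ k = depthCount X u x} : ℕ) : ℝ) := by
      have := hx
      rw [medianRegion, Set.mem_setOf_eq, tukeyDepth] at this
      rw [← this, div_mul_cancel₀]
      exact hn0.ne'
    have h1 : ⌈maxDepth X * n⌉₊ ≤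
        sInf {k : ℕ | ∃ u : EuclideanSpace ℝ (Fin p), u ≠ 0 ∧ k = depthCount X u x} :=
      Nat.ceil_le.mpr hs
    exact h1.trans (Nat.sInf_le ⟨u, hu, rfl⟩)
  · intro h
    have h1 : maxDepth X ≤ tukeyDepth X x := by
      obtain ⟨u, hu, hk⟩ := Nat.sInf_mem (dSet_nonempty X hp x)
      rw [tukeyDepth, le_div_iff₀ hn0, hk]
      exact_mod_cast Nat.ceil_le.mp (h u hu)
    exact le_antisymm (le_maxDepth X hp x) h1

lemma isClosed_level (u : EuclideanSpace ℝ (Fin p)) (m : ℕ) :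
    IsClosed {x : EuclideanSpace ℝ (Fin p) | m ≤ depthCount X u x} := by
  have heq : {x : EuclideanSpace ℝ (Fin p) | m ≤ depthCount X u x} =
      ⋃ s ∈ {s : Finset (Fin n) | s.card = m},
        ⋂ i ∈ s, {x : EuclideanSpace ℝ (Fin p) | ⟪u, X i⟫ ≤ ⟪u, x⟫} := by
    ext x
    simp only [Set.mem_setOf_eq, Set.mem_iUnion, Set.mem_iInter, depthCount_eq]
    constructor
    · intro h
      obtain ⟨s, hs, hcard⟩ := Finset.exists_subset_card_eq h
      exact ⟨s, hcard, fun i hi => (Finset.mem_filter.mp (hs hi)).2⟩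
    · rintro ⟨s, hcard, hmem⟩
      calc m = s.card := hcard.symm
        _ ≤ _ := Finset.card_le_card fun i hi =>
            Finset.mem_filter.mpr ⟨Finset.mem_univ i, hmem i hi⟩
  rw [heq]
  refine Set.Finite.isClosed_biUnion (Set.toFinite _) fun s _ => ?_
  exact isClosed_biInter fun i _ =>
    isClosed_le continuous_const (continuous_const.inner continuous_id)

lemma isClosed_median (hp : 1 ≤ p) (hn : 1 ≤ n) : IsClosed (medianRegion X) := by
  have heq : medianRegion X =
      ⋂ u : {u : EuclideanSpace ℝ (Fin p) // u ≠ 0},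
        {x : EuclideanSpace ℝ (Fin p) | ⌈maxDepth X * n⌉₊ ≤ depthCount X u.1 x} := by
    ext x
    simp only [Set.mem_iInter, Subtype.forall, Set.mem_setOf_eq]
    exact mem_median_iff X hp hn x
  rw [heq]
  exact isClosed_iInter fun u => isClosed_level X u.1 _

lemma convex_median (hp : 1 ≤ p) (hn : 1 ≤ n) : Convex ℝ (medianRegion X) := by
  intro x hx y hy a b ha hb hab
  rw [mem_median_iff X hp hn] at hx hy ⊢
  intro u hu
  have hz : ⟪u, a • x + b • y⟫ = a * ⟪u, x⟫ + b * ⟪u, y⟫ := by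
    rw [inner_add_right, real_inner_smul_right, real_inner_smul_right]
  rcases le_total ⟪u, x⟫ ⟪u, y⟫ with h | h
  · refine (hx u hu).trans (depthCount_mono X ?_)
    rw [hz]
    have h2 := mul_le_mul_of_nonneg_left h hb
    have h3 : a * ⟪u, x⟫ + b * ⟪u, x⟫ = ⟪u, x⟫ := by rw [← add_mul, hab, one_mul]
    linarith
  · refine (hy u hu).trans (depthCount_mono X ?_)
    rw [hz]
    have h2 := mul_le_mul_of_nonneg_left h ha
    have h3 : a * ⟪u, y⟫ + b * ⟪u, y⟫ = ⟪u, y⟫ := by rw [← add_mul, hab, one_mul]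
    linarith

lemma maxDepth_pos (hp : 1 ≤ p) (hn : 1 ≤ n) : 0 < maxDepth X := by
  have hn0 : (0 : ℝ) < n := by exact_mod_cast hn
  have h1 : (1 : ℝ) / n ≤ tukeyDepth X (X ⟨0, hn⟩) := by
    rw [tukeyDepth]
    gcongr
    have : 1 ≤ sInf {k : ℕ | ∃ u : EuclideanSpace ℝ (Fin p),
        u ≠ 0 ∧ k = depthCount X u (X ⟨0, hn⟩)} := by
      refine le_csInf (dSet_nonempty X hp _) ?_
      rintro k ⟨u, hu, rfl⟩
      rw [depthCount_eq]
      refine Finset.card_pos.mpr ⟨⟨0, hn⟩, Finset.mem_filter.mpr ⟨Finset.mem_univ _, le_refl _⟩⟩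
    exact_mod_cast this
  exact lt_of_lt_of_le (by positivity) (h1.trans (le_maxDepth X hp _))

lemma tukeyDepth_far (hn : 1 ≤ n) (x : EuclideanSpace ℝ (Fin p))
    (hfar : ∀ i, ‖X i‖ < ‖x‖) : tukeyDepth X x = 0 := by
  have hxn : 0 < ‖x‖ := lt_of_le_of_lt (norm_nonneg (X ⟨0, hn⟩)) (hfar ⟨0, hn⟩)
  have hx0 : x ≠ 0 := by intro h; rw [h, norm_zero] at hxn; exact lt_irrefl 0 hxn
  have hu : (-x : EuclideanSpace ℝ (Fin p)) ≠ 0 := neg_ne_zero.mpr hx0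
  have hc : depthCount X (-x) x = 0 := by
    rw [depthCount_eq, Finset.card_eq_zero, Finset.filter_eq_empty_iff]
    intro i _
    rw [inner_neg_left, inner_neg_left, neg_le_neg_iff, real_inner_self_eq_norm_mul_norm]
    refine not_le.mpr (lt_of_le_of_lt (real_inner_le_norm x (X i)) ?_)
    exact mul_lt_mul_of_pos_left (hfar i) hxn
  have : sInf {k : ℕ | ∃ u : EuclideanSpace ℝ (Fin p), u ≠ 0 ∧ k = depthCount X u x} = 0 :=
    Nat.sInf_eq_zero.mpr (Or.inl ⟨-x, hu, hc.symm⟩)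
  rw [tukeyDepth, this]
  simp

end TukeyAux

/-- The Tukey median region is nonempty, convex and compact; in particular the
supremum defining `λ*` is attained. -/
theorem medianRegion_nonempty_convex_compact {p n : ℕ} (hp : 1 ≤ p) (hn : 1 ≤ n)
    (X : Fin n → EuclideanSpace ℝ (Fin p)) :
    (medianRegion X).Nonempty ∧ Convex ℝ (medianRegion X) ∧ IsCompact (medianRegion X) ∧
    ∃ x : EuclideanSpace ℝ (Fin p), tukeyDepth X x = maxDepth X := by
  obtain ⟨x₀, hx₀⟩ := maxDepth_attained X hp
  refine ⟨⟨x₀, hx₀⟩, convex_median X hp hn, ?_, ⟨x₀, hx₀⟩⟩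
  obtain ⟨R, hR⟩ := (Set.finite_range fun i => ‖X i‖).bddAbove
  have hRle : ∀ i, ‖X i‖ ≤ R := fun i => hR ⟨i, rfl⟩
  have hsub : medianRegion X ⊆ Metric.closedBall 0 R := by
    intro x hx
    rw [Metric.mem_closedBall, dist_zero_right]
    by_contra hbig
    have hfar : ∀ i, ‖X i‖ < ‖x‖ := fun i => lt_of_le_of_lt (hRle i) (not_le.mp hbig)
    have h0 : tukeyDepth X x = 0 := tukeyDepth_far X hn x hfar
    have := maxDepth_pos X hp hn
    rw [medianRegion, Set.mem_setOf_eq, h0] at hx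
    exact lt_irrefl _ (hx ▸ this)
  exact Metric.isCompact_of_isClosed_isBounded (isClosed_median X hp hn)
    (Metric.isBounded_closedBall.subset hsub)
end
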